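/- Let k be an even integer and t an odd integer with 0 < t < k. Let H = (V,E) be a k-uniform hypergraph with n vertices, m ≥ 1 edges, and minimum degree δ, and let λ be the least element of the set {k·∑_{e∈E} ∏_{i∈e} x_i : x ∈ ℝ^V, ∑_{i∈V} x_i^k = 1} (the minimum H-eigenvalue of the adjacency tensor of H). Then the t-independence number satisfies α_t(H) ≤ t(km − nλ)·(−λ)^{t/(k−t)} / ( (k−t)·δ^{k/(k−t)} + (kδ − tλ)·(−λ)^{t/(k−t)} ). -/

import Mathlib

set_option maxHeartbeats 1000000

-- Auxiliary: the minimum eigenvalue is at most -1 when there is at least one edge.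
lemma aux_lam_le_neg_one
    {V : Type*} [Fintype V] [DecidableEq V]
    (k : ℕ) (hk : Even k) (hk0 : 0 < k)
    (E : Finset (Finset V)) (huniform : ∀ e ∈ E, e.card = k) (hm : 1 ≤ E.card)
    (lam : ℝ)
    (hlam : IsLeast {y : ℝ | ∃ x : V → ℝ, ∑ i, x i ^ k = 1 ∧
      y = k * ∑ e ∈ E, ∏ i ∈ e, x i} lam) :
    lam ≤ -1 := by
  classical
  obtain ⟨e, he⟩ := Finset.card_pos.mp hm
  have hek : e.card = k := huniform e he
  have hene : e.Nonempty := Finset.card_pos.mp (by omega)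
  obtain ⟨v, hv⟩ := hene
  have hknR : (0:ℝ) < (k:ℝ) := by exact_mod_cast hk0
  set c : ℝ := ((k:ℝ)⁻¹) ^ ((k:ℝ)⁻¹) with hc
  have hcpos : 0 < c := Real.rpow_pos_of_pos (by positivity) _
  have hck : c ^ k = (k:ℝ)⁻¹ := Real.rpow_inv_natCast_pow (by positivity) hk0.ne'
  set x : V → ℝ := fun i => if i = v then -c else if i ∈ e then c else 0 with hx
  have hxnorm : ∑ i, x i ^ k = 1 := by
    have h1 : ∀ i ∈ Finset.univ, i ∉ e → x i ^ k = 0 := by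
      intro i _ hie
      have hiv : i ≠ v := fun h => hie (h ▸ hv)
      simp [hx, hie, hiv, hk0.ne']
    rw [← Finset.sum_subset (Finset.subset_univ e) h1]
    have h2 : ∀ i ∈ e, x i ^ k = c ^ k := by
      intro i hie
      by_cases hiv : i = v
      · simp [hx, hiv, hk.neg_pow]
      · simp [hx, hiv, hie]
    rw [Finset.sum_congr rfl h2, Finset.sum_const, hek, hck, nsmul_eq_mul,
      mul_inv_cancel₀ hknR.ne']
  have hprod : ∏ i ∈ e, x i = -(k:ℝ)⁻¹ := by
    rw [← Finset.mul_prod_erase e x hv]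
    have h3 : ∀ i ∈ e.erase v, x i = c := by
      intro i hi
      have h1 := Finset.ne_of_mem_erase hi
      have h2 := Finset.mem_of_mem_erase hi
      simp [hx, h1, h2]
    rw [Finset.prod_congr rfl h3, Finset.prod_const, Finset.card_erase_of_mem hv, hek]
    have hxv : x v = -c := by simp [hx]
    have hcc : c * c ^ (k-1) = c ^ k := by
      rw [← pow_succ']
      congr 1
      omega
    rw [hxv, neg_mul, hcc, hck]
  have hsum : ∑ e' ∈ E, ∏ i ∈ e', x i = -(k:ℝ)⁻¹ := by
    rw [Finset.sum_eq_single_of_mem e he, hprod]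
    intro e' he' hne
    have hsub : ¬ e' ⊆ e := by
      intro hsub
      exact hne (Finset.eq_of_subset_of_card_le hsub (by rw [hek, huniform e' he']))
    obtain ⟨i, hie', hie⟩ := Finset.not_subset.mp hsub
    have hiv : i ≠ v := fun h => hie (h ▸ hv)
    refine Finset.prod_eq_zero hie' ?_
    simp [hx, hie, hiv]
  have hmem : (-1 : ℝ) ∈ {y : ℝ | ∃ x : V → ℝ, ∑ i, x i ^ k = 1 ∧
      y = k * ∑ e ∈ E, ∏ i ∈ e, x i} := by
    refine ⟨x, hxnorm, ?_⟩
    rw [hsum, mul_neg, mul_inv_cancel₀ hknR.ne']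
  exact hlam.2 hmem

theorem hoffman_bound_even_hypergraph
    {V : Type*} [Fintype V] [DecidableEq V]
    (k t : ℕ) (hk : Even k) (ht : Odd t) (ht0 : 0 < t) (htk : t < k)
    (E : Finset (Finset V)) (huniform : ∀ e ∈ E, e.card = k) (hm : 1 ≤ E.card)
    (δ : ℕ) (hδ : IsLeast (Set.range fun i : V => (E.filter fun e => i ∈ e).card) δ)
    (lam : ℝ)
    (hlam : IsLeast {y : ℝ | ∃ x : V → ℝ, ∑ i, x i ^ k = 1 ∧
      y = k * ∑ e ∈ E, ∏ i ∈ e, x i} lam)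
    (α : ℕ)
    (hα : IsGreatest {c : ℕ | ∃ S : Finset V,
      (∀ e ∈ E, (e ∩ S).card = 0 ∨ (e ∩ S).card = t) ∧ S.card = c} α) :
    (α : ℝ) ≤ t * (k * E.card - Fintype.card V * lam) * (-lam) ^ ((t : ℝ) / (k - t)) /
      ((k - t) * (δ : ℝ) ^ ((k : ℝ) / (k - t)) +
        (k * δ - t * lam) * (-lam) ^ ((t : ℝ) / (k - t))) := by
  classical
  have hk0 : 0 < k := lt_trans ht0 htk
  obtain ⟨S, hS, hScard⟩ := hα.1
  obtain ⟨e₀, he₀⟩ := Finset.card_pos.mp hm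
  have hlam1 : lam ≤ -1 := aux_lam_le_neg_one k hk hk0 E huniform hm lam hlam
  have hLpos : (0:ℝ) < -lam := by linarith
  have htR : (0:ℝ) < (t:ℝ) := by exact_mod_cast ht0
  have hkR : (0:ℝ) < (k:ℝ) := by exact_mod_cast hk0
  have hdR : (0:ℝ) < (k:ℝ) - t := by
    have h : (t:ℝ) < (k:ℝ) := by exact_mod_cast htk
    linarith
  have hδR : (0:ℝ) ≤ (δ:ℝ) := Nat.cast_nonneg δ
  set μ : ℝ := (-lam) ^ ((t:ℝ) / ((k:ℝ) - t)) with hμ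
  have hμpos : 0 < μ := Real.rpow_pos_of_pos hLpos _
  set r : ℝ := ((δ:ℝ) / (-lam)) ^ (((k:ℝ) - t)⁻¹) with hr
  have hrnn : 0 ≤ r := Real.rpow_nonneg (by positivity) _
  have hqnn : (0:ℝ) ≤ (δ:ℝ) / (-lam) := by positivity
  have hμne : μ ≠ 0 := hμpos.ne'
  -- key rpow identities
  have hrt : μ * r ^ t = (δ:ℝ) ^ ((t:ℝ) / ((k:ℝ) - t)) := by
    rw [hr, ← Real.rpow_natCast (((δ:ℝ) / (-lam)) ^ (((k:ℝ) - t)⁻¹)) t,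
      ← Real.rpow_mul hqnn, Real.div_rpow hδR hLpos.le, inv_mul_eq_div, hμ]
    rw [mul_div_assoc']
    rw [mul_comm, mul_div_assoc, div_self (by positivity : ((-lam) ^ ((t:ℝ)/((k:ℝ)-t)) : ℝ) ≠ 0), mul_one]
  have hrk : (-lam) * (μ * r ^ k) = (δ:ℝ) ^ ((k:ℝ) / ((k:ℝ) - t)) := by
    rw [hr, ← Real.rpow_natCast (((δ:ℝ) / (-lam)) ^ (((k:ℝ) - t)⁻¹)) k,
      ← Real.rpow_mul hqnn, Real.div_rpow hδR hLpos.le, inv_mul_eq_div, hμ]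
    have h1 : ((-lam) ^ ((t:ℝ)/((k:ℝ)-t)) : ℝ) * ((δ:ℝ) ^ ((k:ℝ)/((k:ℝ)-t)) / (-lam) ^ ((k:ℝ)/((k:ℝ)-t)))
        = (δ:ℝ) ^ ((k:ℝ)/((k:ℝ)-t)) * ((-lam) ^ ((t:ℝ)/((k:ℝ)-t)) / (-lam) ^ ((k:ℝ)/((k:ℝ)-t))) := by
      ring
    rw [h1, ← Real.rpow_sub hLpos]
    have h2 : (t:ℝ)/((k:ℝ)-t) - (k:ℝ)/((k:ℝ)-t) = -1 := by
      field_simp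
      ring
    rw [h2, Real.rpow_neg_one]
    rw [mul_comm ((δ:ℝ) ^ ((k:ℝ)/((k:ℝ)-t))) _, ← mul_assoc, mul_inv_cancel₀ hLpos.ne', one_mul]
  have hδδ : (δ:ℝ) * (δ:ℝ) ^ ((t:ℝ) / ((k:ℝ) - t)) = (δ:ℝ) ^ ((k:ℝ) / ((k:ℝ) - t)) := by
    rcases eq_or_lt_of_le hδR with h0 | hpos
    · have het : ((t:ℝ)/((k:ℝ)-t)) ≠ 0 := ne_of_gt (div_pos htR hdR)
      have hek : ((k:ℝ)/((k:ℝ)-t)) ≠ 0 := ne_of_gt (div_pos hkR hdR)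
      rw [← h0, Real.zero_rpow het, Real.zero_rpow hek, zero_mul]
    · have h3 : (1:ℝ) + (t:ℝ)/((k:ℝ)-t) = (k:ℝ)/((k:ℝ)-t) := by
        field_simp
        ring
      calc (δ:ℝ) * (δ:ℝ) ^ ((t:ℝ)/((k:ℝ)-t))
          = (δ:ℝ) ^ (1:ℝ) * (δ:ℝ) ^ ((t:ℝ)/((k:ℝ)-t)) := by rw [Real.rpow_one]
        _ = (δ:ℝ) ^ ((1:ℝ) + (t:ℝ)/((k:ℝ)-t)) := (Real.rpow_add hpos _ _).symm
        _ = _ := by rw [h3]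
  -- S is not everything
  have hSne : S ≠ Finset.univ := by
    intro h
    have h2 := hS e₀ he₀
    rw [h, Finset.inter_univ, huniform e₀ he₀] at h2
    omega
  have hsn : S.card < Fintype.card V :=
    lt_of_le_of_ne (Finset.card_le_univ S) (fun h => hSne ((Finset.card_eq_iff_eq_univ S).mp h))
  have hαn : α < Fintype.card V := hScard ▸ hsn
  -- counting
  set M : ℕ := (E.filter fun e => (e ∩ S).card = t).card with hMdef
  have hMle : M ≤ E.card := Finset.card_filter_le _ _
  have hcount : α * δ ≤ t * M := by
    have h2 : S.card * δ ≤ ∑ i ∈ S, (E.filter fun e => i ∈ e).card := by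
      calc S.card * δ = ∑ _i ∈ S, δ := by rw [Finset.sum_const, smul_eq_mul]
        _ ≤ _ := Finset.sum_le_sum fun i _ => hδ.2 ⟨i, rfl⟩
    have h3 : ∑ i ∈ S, (E.filter fun e => i ∈ e).card = ∑ e ∈ E, (e ∩ S).card := by
      have h4 : ∀ e : Finset V, (e ∩ S).card = ∑ i ∈ S, if i ∈ e then 1 else 0 := by
        intro e
        rw [Finset.inter_comm, ← Finset.filter_mem_eq_inter, Finset.card_filter]
      simp_rw [h4, Finset.card_filter]
      exact Finset.sum_comm
    have h5 : ∑ e ∈ E, (e ∩ S).card = t * M := by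
      rw [← Finset.sum_filter_add_sum_filter_not E (fun e => (e ∩ S).card = t)]
      have ha : ∑ e ∈ E.filter (fun e => (e ∩ S).card = t), (e ∩ S).card = M * t := by
        rw [Finset.sum_congr rfl (fun e he => (Finset.mem_filter.mp he).2),
          Finset.sum_const, smul_eq_mul]
      have hb : ∑ e ∈ E.filter (fun e => ¬(e ∩ S).card = t), (e ∩ S).card = 0 := by
        refine Finset.sum_eq_zero fun e he => ?_
        obtain ⟨heE, hne⟩ := Finset.mem_filter.mp he
        rcases hS e heE with h | h
        · exact h
        · exact absurd h hne
      rw [ha, hb, add_zero, Nat.mul_comm]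
    calc α * δ = S.card * δ := by rw [hScard]
      _ ≤ _ := h2
      _ = t * M := h3.trans h5
  have hcountR : (α:ℝ) * δ ≤ (t:ℝ) * M := by exact_mod_cast hcount
  -- the test vector
  set P : ℝ := (α:ℝ) * r ^ k + ((Fintype.card V : ℝ) - α) with hPdef
  have hnαR : (α:ℝ) < (Fintype.card V : ℝ) := by exact_mod_cast hαn
  have hPpos : 0 < P := by
    have h : 0 ≤ (α:ℝ) * r ^ k := by positivity
    rw [hPdef]
    linarith
  set b : ℝ := P⁻¹ ^ ((k:ℝ)⁻¹) with hb
  have hbpos : 0 < b := Real.rpow_pos_of_pos (inv_pos.mpr hPpos) _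
  have hbk : b ^ k = P⁻¹ := Real.rpow_inv_natCast_pow (inv_pos.mpr hPpos).le hk0.ne'
  set c : ℝ := r * b with hcdef
  set x : V → ℝ := fun i => if i ∈ S then -c else b with hx
  have hckk : c ^ k = r ^ k * b ^ k := mul_pow r b k
  have hxnorm : ∑ i, x i ^ k = 1 := by
    have h1 : ∀ i, x i ^ k = if i ∈ S then c ^ k else b ^ k := by
      intro i
      by_cases h : i ∈ S <;> simp [hx, h, hk.neg_pow]
    simp_rw [h1]
    rw [← Finset.sum_add_sum_compl S,
      Finset.sum_congr rfl (fun i hi => if_pos hi),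
      Finset.sum_congr (rfl : Sᶜ = Sᶜ) (fun i hi => if_neg (Finset.mem_compl.mp hi)),
      Finset.sum_const, Finset.sum_const, Finset.card_compl, hScard,
      nsmul_eq_mul, nsmul_eq_mul, Nat.cast_sub hαn.le, hckk, hbk]
    have h2 : ((α:ℝ) * r ^ k + ((Fintype.card V : ℝ) - α)) * P⁻¹ = 1 := by
      rw [← hPdef]
      exact mul_inv_cancel₀ hPpos.ne'
    linear_combination h2
  have hesum : ∑ e ∈ E, ∏ i ∈ e, x i
      = (M:ℝ) * (-(r ^ t * P⁻¹)) + ((E.card:ℝ) - M) * P⁻¹ := by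
    have hterm : ∀ e ∈ E, ∏ i ∈ e, x i
        = if (e ∩ S).card = t then -(r ^ t * P⁻¹) else P⁻¹ := by
      intro e he
      have hsplit : ∏ i ∈ e, x i = (-c) ^ (e ∩ S).card * b ^ (e \ S).card := by
        rw [← Finset.prod_filter_mul_prod_filter_not e (· ∈ S) x]
        congr 1
        · have hmem : ∀ i ∈ e.filter (· ∈ S), x i = -c := by
            intro i hi
            simp [hx, (Finset.mem_filter.mp hi).2]
          rw [Finset.prod_congr rfl hmem, Finset.prod_const, Finset.filter_mem_eq_inter]
        · have hmem : ∀ i ∈ e.filter (· ∉ S), x i = b := by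
            intro i hi
            simp [hx, (Finset.mem_filter.mp hi).2]
          rw [Finset.prod_congr rfl hmem, Finset.prod_const, ← Finset.sdiff_eq_filter]
      have hcards : (e \ S).card + (e ∩ S).card = k := by
        rw [Finset.card_sdiff_add_card_inter, huniform e he]
      rcases hS e he with h0 | ht'
      · rw [if_neg (by omega)]
        have h6 : (e \ S).card = k := by omega
        rw [hsplit, h0, pow_zero, one_mul, h6, hbk]
      · rw [if_pos ht', hsplit, ht']
        have h6 : (e \ S).card = k - t := by omega
        rw [h6, ht.neg_pow, neg_mul]
        have h7 : c ^ t * b ^ (k - t) = r ^ t * P⁻¹ := by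
          rw [hcdef, mul_pow, mul_assoc, ← pow_add]
          have h8 : t + (k - t) = k := by omega
          rw [h8, hbk]
        rw [h7]
    rw [Finset.sum_congr rfl hterm, Finset.sum_ite, Finset.sum_const, Finset.sum_const,
      nsmul_eq_mul, nsmul_eq_mul]
    have h8 : (E.filter (fun e => ¬(e ∩ S).card = t)).card = E.card - M := by
      have h9 := Finset.card_filter_add_card_filter_not
        (s := E) (fun e => (e ∩ S).card = t)
      omega
    rw [h8, Nat.cast_sub hMle]
  have hmain : lam ≤ (k:ℝ) * ((M:ℝ) * (-(r ^ t * P⁻¹)) + ((E.card:ℝ) - M) * P⁻¹) :=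
    hlam.2 ⟨x, hxnorm, by rw [hesum]⟩
  -- final algebra
  have h1' : lam * P ≤ (k:ℝ) * ((M:ℝ) * (-(r ^ t)) + ((E.card:ℝ) - M)) := by
    have h := mul_le_mul_of_nonneg_right hmain hPpos.le
    have hPP : P⁻¹ * P = 1 := inv_mul_cancel₀ hPpos.ne'
    calc lam * P ≤ ((k:ℝ) * ((M:ℝ) * (-(r ^ t * P⁻¹)) + ((E.card:ℝ) - M) * P⁻¹)) * P := h
      _ = (k:ℝ) * ((M:ℝ) * (-(r ^ t)) + ((E.card:ℝ) - M)) * (P⁻¹ * P) := by ring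
      _ = _ := by rw [hPP, mul_one]
  have h2' : (k:ℝ) * (1 + r ^ t) * ((α:ℝ) * δ) ≤ (k:ℝ) * (1 + r ^ t) * ((t:ℝ) * M) :=
    mul_le_mul_of_nonneg_left hcountR (by positivity)
  have h3' : (α:ℝ) * ((k:ℝ) * δ * (1 + r ^ t) + (t:ℝ) * lam * (r ^ k - 1)) ≤
      (t:ℝ) * ((k:ℝ) * E.card - (Fintype.card V : ℝ) * lam) := by
    have h1'' := mul_le_mul_of_nonneg_left h1' htR.le
    rw [hPdef] at h1''
    nlinarith [h1'', h2']
  have hD : ((k:ℝ) - t) * (δ:ℝ) ^ ((k:ℝ) / ((k:ℝ) - t)) + ((k:ℝ) * δ - t * lam) * μ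
      = ((k:ℝ) * δ * (1 + r ^ t) + (t:ℝ) * lam * (r ^ k - 1)) * μ := by
    linear_combination (-(k:ℝ) * δ) * hrt + (t:ℝ) * hrk + (-(k:ℝ)) * hδδ
  have hDpos : 0 < ((k:ℝ) - t) * (δ:ℝ) ^ ((k:ℝ) / ((k:ℝ) - t)) + ((k:ℝ) * δ - t * lam) * μ := by
    have hterm2 : 0 < ((k:ℝ) * δ - t * lam) := by nlinarith
    have hterm1 : 0 ≤ ((k:ℝ) - t) * (δ:ℝ) ^ ((k:ℝ) / ((k:ℝ) - t)) :=
      mul_nonneg hdR.le (Real.rpow_nonneg hδR _)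
    nlinarith [mul_pos hterm2 hμpos]
  rw [le_div_iff₀ hDpos, hD]
  calc (α:ℝ) * (((k:ℝ) * δ * (1 + r ^ t) + (t:ℝ) * lam * (r ^ k - 1)) * μ)
      = ((α:ℝ) * ((k:ℝ) * δ * (1 + r ^ t) + (t:ℝ) * lam * (r ^ k - 1))) * μ := by ring
    _ ≤ (t:ℝ) * ((k:ℝ) * E.card - (Fintype.card V : ℝ) * lam) * μ :=
      mul_le_mul_of_nonneg_right h3' hμpos.le
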